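/- Let n ≥ 2, let q̄, ℓ̄ ∈ ℤ^n be linearly independent over ℝ, and let a, b > 0. Then ∑_{p ∈ ℤ} ∑_{r ∈ ℤ} ∫_{[0,1]^n} 1_{[−a,a]}(p + ⟨ū, q̄⟩) · 1_{[−b,b]}(r + ⟨ū, ℓ̄⟩) dū = 4ab, where 1_{[−c,c]} denotes the indicator function of the interval [−c,c] and ⟨·,·⟩ is the standard inner product on ℝ^n. -/

import Mathlib

open MeasureTheory

noncomputable section

open Set Function
open scoped ENNReal

instance DPIaux_fact_zero_lt_one : Fact ((0:ℝ) < 1) := ⟨zero_lt_one⟩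

namespace DPIaux

/-- The `ℝ≥0∞`-valued indicator of `[-c, c]`. -/
def fE (c : ℝ) : ℝ → ℝ≥0∞ := Set.indicator (Set.Icc (-c) c) 1

lemma fE_measurable (c : ℝ) : Measurable (fE c) :=
  measurable_one.indicator measurableSet_Icc

/-- Periodization of `fE c` over the integers. -/
def per (c : ℝ) : ℝ → ℝ≥0∞ := fun x => ∑' p : ℤ, fE c ((p : ℝ) + x)

lemma per_measurable (c : ℝ) : Measurable (per c) :=
  Measurable.ennreal_tsum fun _ => (fE_measurable c).comp (measurable_const.add measurable_id)

lemma per_periodic (c : ℝ) : Function.Periodic (per c) 1 := by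
  intro x
  have h := (Equiv.addRight (1 : ℤ)).tsum_eq (fun p : ℤ => fE c ((p : ℝ) + x))
  show per c (x + 1) = per c x
  rw [per, per, ← h]
  refine tsum_congr fun p => ?_
  have h2 : ((p + 1 : ℤ) : ℝ) + x = (p : ℝ) + (x + 1) := by push_cast; ring
  simp only [Equiv.coe_addRight, h2]

/-- The induced function on the unit additive circle. -/
def perCirc (c : ℝ) : AddCircle (1 : ℝ) → ℝ≥0∞ := (per_periodic c).lift

lemma perCirc_coe (c x : ℝ) : perCirc c ((x : ℝ) : AddCircle (1:ℝ)) = per c x :=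
  (per_periodic c).lift_coe x

lemma perCirc_measurable (c : ℝ) : Measurable (perCirc c) := by
  have h : perCirc c = fun z =>
      per c ((AddCircle.equivIoc 1 0 z : Set.Ioc (0:ℝ) (0+1)) : ℝ) := by
    funext z
    have hz : ((((AddCircle.equivIoc 1 0 z : Set.Ioc (0:ℝ) (0+1)) : ℝ)) : AddCircle (1:ℝ)) = z :=
      (AddCircle.equivIoc 1 0).symm_apply_apply z
    conv_lhs => rw [← hz]
    exact perCirc_coe c _
  rw [h]
  exact (per_measurable c).comp
    (measurable_subtype_coe.comp (AddCircle.measurableEquivIoc 1 0).measurable)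

lemma lintegral_fE_shift (c : ℝ) (p : ℤ) :
    (∫⁻ x in Set.Ioc (0:ℝ) 1, fE c ((p : ℝ) + x))
      = volume (Set.Icc (-c) c ∩ Set.Ioc (p:ℝ) (p+1)) := by
  have hf : Measurable fun x : ℝ => (p:ℝ) + x := measurable_const.add measurable_id
  have hset : MeasurableSet ((fun x : ℝ => (p:ℝ) + x) ⁻¹' Set.Icc (-c) c) :=
    hf measurableSet_Icc
  have h1 : (fun x : ℝ => fE c ((p : ℝ) + x))
      = Set.indicator ((fun x : ℝ => (p:ℝ) + x) ⁻¹' Set.Icc (-c) c) 1 := by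
    funext x
    have hiff : ((p:ℝ) + x ∈ Set.Icc (-c) c)
        ↔ (x ∈ (fun x : ℝ => (p:ℝ)+x) ⁻¹' Set.Icc (-c) c) := Iff.rfl
    by_cases h : (p:ℝ) + x ∈ Set.Icc (-c) c
    · rw [fE, Set.indicator_of_mem h, Set.indicator_of_mem (hiff.mp h)]
      rfl
    · rw [fE, Set.indicator_of_notMem h, Set.indicator_of_notMem (fun hx => h (hiff.mpr hx))]
  rw [h1, lintegral_indicator_one hset, Measure.restrict_apply hset]
  have h2 : (fun x : ℝ => (p:ℝ) + x) ⁻¹' Set.Icc (-c) c ∩ Set.Ioc 0 1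
      = (fun x : ℝ => (p:ℝ) + x) ⁻¹' (Set.Icc (-c) c ∩ Set.Ioc (p:ℝ) (p+1)) := by
    ext x
    simp only [Set.mem_inter_iff, Set.mem_preimage, Set.mem_Icc, Set.mem_Ioc]
    constructor
    · rintro ⟨⟨h3, h4⟩, h5, h6⟩; exact ⟨⟨h3, h4⟩, by linarith, by linarith⟩
    · rintro ⟨⟨h3, h4⟩, h5, h6⟩; exact ⟨⟨h3, h4⟩, by linarith, by linarith⟩
  rw [h2, measure_preimage_add]

lemma lintegral_perCirc (c : ℝ) (hc : 0 < c) :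
    ∫⁻ z : AddCircle (1:ℝ), perCirc c z = ENNReal.ofReal (2 * c) := by
  rw [← AddCircle.lintegral_preimage 1 0 (perCirc c), zero_add]
  have h1 : ∀ x : ℝ, perCirc c ((x : ℝ) : AddCircle (1:ℝ)) = ∑' p : ℤ, fE c ((p : ℝ) + x) :=
    fun x => perCirc_coe c x
  rw [show (fun x : ℝ => perCirc c ((x : ℝ) : AddCircle (1:ℝ)))
      = fun x : ℝ => ∑' p : ℤ, fE c ((p : ℝ) + x) from funext h1]
  have hmeasp : ∀ p : ℤ, AEMeasurable (fun x : ℝ => fE c ((p:ℝ) + x))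
      (volume.restrict (Set.Ioc (0:ℝ) 1)) := fun p =>
    (((fE_measurable c).comp (measurable_const.add measurable_id) :
      Measurable fun x : ℝ => fE c ((p:ℝ) + x))).aemeasurable
  rw [lintegral_tsum hmeasp]
  have h2 : ∀ p : ℤ, (∫⁻ x in Set.Ioc (0:ℝ) 1, fE c ((p : ℝ) + x))
      = volume (Set.Icc (-c) c ∩ Set.Ioc (p:ℝ) (p+1)) := lintegral_fE_shift c
  rw [tsum_congr h2]
  have hd : Pairwise (Function.onFun Disjoint
      fun p : ℤ => Set.Icc (-c) c ∩ Set.Ioc (p:ℝ) (p+1)) := by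
    intro p r hpr
    refine Disjoint.mono Set.inter_subset_right Set.inter_subset_right ?_
    rw [Set.Ioc_disjoint_Ioc]
    rcases lt_or_gt_of_ne hpr with h | h
    · have : (p : ℝ) + 1 ≤ r := by exact_mod_cast h
      calc min ((p:ℝ)+1) ((r:ℝ)+1) ≤ (p:ℝ)+1 := min_le_left _ _
        _ ≤ max (p:ℝ) (r:ℝ) := le_trans this (le_max_right _ _)
    · have : (r : ℝ) + 1 ≤ p := by exact_mod_cast h
      calc min ((p:ℝ)+1) ((r:ℝ)+1) ≤ (r:ℝ)+1 := min_le_right _ _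
        _ ≤ max (p:ℝ) (r:ℝ) := le_trans this (le_max_left _ _)
  rw [← measure_iUnion hd fun p => measurableSet_Icc.inter measurableSet_Ioc]
  rw [← Set.inter_iUnion]
  rw [iUnion_Ioc_intCast (α := ℝ), Set.inter_univ, Real.volume_Icc]
  congr 1
  ring

lemma pi_restrict {n : ℕ} (t : Fin n → Set ℝ) (ht : ∀ i, MeasurableSet (t i)) :
    (volume : Measure (Fin n → ℝ)).restrict (Set.univ.pi t)
      = Measure.pi (fun i => (volume : Measure ℝ).restrict (t i)) := by
  refine (Measure.pi_eq fun s hs => ?_).symm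
  rw [Measure.restrict_apply (MeasurableSet.univ_pi hs), ← Set.pi_inter_distrib,
    volume_pi, Measure.pi_pi]
  exact Finset.prod_congr rfl fun i _ => (Measure.restrict_apply (hs i)).symm

lemma box_ae (n : ℕ) :
    (Set.univ.pi fun _ : Fin n => Set.Icc (0:ℝ) 1)
      =ᵐ[(volume : Measure (Fin n → ℝ))]
      (Set.univ.pi fun _ : Fin n => Set.Ioc (0:ℝ) 1) := by
  have hsub : (Set.univ.pi fun _ : Fin n => Set.Ioc (0:ℝ) 1)
      ⊆ (Set.univ.pi fun _ : Fin n => Set.Icc (0:ℝ) 1) :=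
    Set.pi_mono fun i _ => Set.Ioc_subset_Icc_self
  have hIoc : (volume : Measure (Fin n → ℝ))
      (Set.univ.pi fun _ : Fin n => Set.Ioc (0:ℝ) 1) = 1 := by
    rw [volume_pi, Measure.pi_pi]
    simp [Real.volume_Ioc]
  have hIcc : (volume : Measure (Fin n → ℝ))
      (Set.univ.pi fun _ : Fin n => Set.Icc (0:ℝ) 1) = 1 := by
    rw [volume_pi, Measure.pi_pi]
    simp [Real.volume_Icc]
  have h1 : (volume : Measure (Fin n → ℝ))
      ((Set.univ.pi fun _ : Fin n => Set.Icc (0:ℝ) 1)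
        \ (Set.univ.pi fun _ : Fin n => Set.Ioc (0:ℝ) 1)) = 0 := by
    rw [measure_diff hsub
      (MeasurableSet.univ_pi fun _ => measurableSet_Ioc).nullMeasurableSet
      (by rw [hIoc]; exact ENNReal.one_ne_top), hIcc, hIoc, tsub_self]
  have h2 : (volume : Measure (Fin n → ℝ))
      ((Set.univ.pi fun _ : Fin n => Set.Ioc (0:ℝ) 1)
        \ (Set.univ.pi fun _ : Fin n => Set.Icc (0:ℝ) 1)) = 0 := by
    rw [Set.diff_eq_empty.mpr hsub]; simp
  exact MeasureTheory.ae_eq_set.mpr ⟨h1, h2⟩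

lemma exists_sol {n : ℕ} (q ℓ : Fin n → ℤ)
    (hindep : LinearIndependent ℝ
      ![(fun j => (q j : ℝ) : Fin n → ℝ), (fun j => (ℓ j : ℝ) : Fin n → ℝ)])
    (x y : ℝ) :
    ∃ u : Fin n → ℝ, (∑ j, u j * (q j : ℝ)) = x ∧ (∑ j, u j * (ℓ j : ℝ)) = y := by
  classical
  set M : Matrix (Fin 2) (Fin n) ℝ :=
    Matrix.of ![(fun j => (q j : ℝ) : Fin n → ℝ), (fun j => (ℓ j : ℝ) : Fin n → ℝ)] with hM
  have hinj : Function.Injective (Matrix.mulVecLin M.transpose) := by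
    rw [← LinearMap.ker_eq_bot, LinearMap.ker_eq_bot']
    intro c hc
    have hsum : ∑ i : Fin 2, c i •
        (![(fun j => (q j : ℝ) : Fin n → ℝ), (fun j => (ℓ j : ℝ) : Fin n → ℝ)]) i = 0 := by
      funext j
      have h := congrFun hc j
      simp only [Matrix.mulVecLin_apply, Matrix.mulVec, dotProduct,
        Fin.sum_univ_two, Matrix.transpose_apply, hM, Matrix.of_apply,
        Matrix.cons_val_zero, Matrix.cons_val_one, Matrix.head_cons, Pi.zero_apply] at h
      simp only [Finset.sum_apply, Fin.sum_univ_two, Pi.smul_apply, Pi.zero_apply,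
        Matrix.cons_val_zero, Matrix.cons_val_one, Matrix.head_cons, smul_eq_mul]
      linear_combination h
    funext i
    exact Fintype.linearIndependent_iff.mp hindep c hsum i
  have hrankT : Matrix.rank M.transpose = 2 := by
    have h1 : Matrix.rank M.transpose
        = Module.finrank ℝ (LinearMap.range (Matrix.mulVecLin M.transpose)) := rfl
    rw [h1, LinearMap.finrank_range_of_inj hinj]
    simp
  have hrankM : Matrix.rank M = 2 := by rw [← Matrix.rank_transpose]; exact hrankT
  have hsurj : Function.Surjective (Matrix.mulVecLin M) := by
    rw [← LinearMap.range_eq_top]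
    apply Submodule.eq_top_of_finrank_eq
    have h1 : Module.finrank ℝ (LinearMap.range (Matrix.mulVecLin M)) = Matrix.rank M := rfl
    rw [h1, hrankM]
    simp
  obtain ⟨u, hu⟩ := hsurj ![x, y]
  refine ⟨u, ?_, ?_⟩
  · have h := congrFun hu 0
    simp only [Matrix.mulVecLin_apply, Matrix.mulVec, dotProduct, hM,
      Matrix.of_apply, Matrix.cons_val_zero] at h
    rw [← h]
    exact Finset.sum_congr rfl fun j _ => by simp [mul_comm]
  · have h := congrFun hu 1
    simp only [Matrix.mulVecLin_apply, Matrix.mulVec, dotProduct, hM,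
      Matrix.of_apply, Matrix.cons_val_one, Matrix.head_cons, Matrix.cons_val_zero] at h
    rw [← h]
    exact Finset.sum_congr rfl fun j _ => by simp [mul_comm]

end DPIaux

open DPIaux

theorem double_periodization_identity
    (n : ℕ) (hn : 2 ≤ n)
    (q ℓ : Fin n → ℤ)
    (hindep : LinearIndependent ℝ
      ![(fun j => (q j : ℝ) : Fin n → ℝ), (fun j => (ℓ j : ℝ) : Fin n → ℝ)])
    (a b : ℝ) (ha : 0 < a) (hb : 0 < b) :
    (∑' p : ℤ, ∑' r : ℤ,
      ∫ u in Set.univ.pi (fun _ : Fin n => Set.Icc (0 : ℝ) 1),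
        (Set.indicator (Set.Icc (-a) a) 1 ((p : ℝ) + ∑ j, u j * (q j : ℝ))) *
        (Set.indicator (Set.Icc (-b) b) 1 ((r : ℝ) + ∑ j, u j * (ℓ j : ℝ))))
      = 4 * a * b := by
  classical
  -- measurable linear forms
  have hAmeas : Measurable fun u : Fin n → ℝ => ∑ j, u j * (q j : ℝ) :=
    Finset.measurable_sum _ fun j _ => (measurable_pi_apply j).mul_const _
  have hBmeas : Measurable fun u : Fin n → ℝ => ∑ j, u j * (ℓ j : ℝ) :=
    Finset.measurable_sum _ fun j _ => (measurable_pi_apply j).mul_const _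
  -- the homomorphism to the 2-torus
  let φ : (Fin n → AddCircle (1:ℝ)) →+ (AddCircle (1:ℝ) × AddCircle (1:ℝ)) :=
    { toFun := fun v => (∑ j, q j • v j, ∑ j, ℓ j • v j)
      map_zero' := by simp
      map_add' := by
        intro v w
        simp [smul_add, Finset.sum_add_distrib, Prod.ext_iff] }
  have hφ_apply : ∀ v : Fin n → AddCircle (1:ℝ),
      φ v = (∑ j, q j • v j, ∑ j, ℓ j • v j) := fun _ => rfl
  -- commutation with the quotient map
  let mkH : ℝ →+ AddCircle (1:ℝ) := QuotientAddGroup.mk' _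
  have hmkH : ∀ x : ℝ, mkH x = (x : AddCircle (1:ℝ)) := fun _ => rfl
  have hcomm : ∀ (c : Fin n → ℤ) (u : Fin n → ℝ),
      (∑ j, c j • ((u j : ℝ) : AddCircle (1:ℝ)))
        = (((∑ j, u j * (c j : ℝ)) : ℝ) : AddCircle (1:ℝ)) := by
    intro c u
    rw [← hmkH, map_sum]
    refine Finset.sum_congr rfl fun j _ => ?_
    rw [show u j * (c j : ℝ) = c j • u j by rw [zsmul_eq_mul]; ring, map_zsmul, hmkH]
  have hφmk : ∀ u : Fin n → ℝ,
      φ (fun i => ((u i : ℝ) : AddCircle (1:ℝ)))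
        = ((((∑ j, u j * (q j : ℝ)) : ℝ) : AddCircle (1:ℝ)),
           (((∑ j, u j * (ℓ j : ℝ)) : ℝ) : AddCircle (1:ℝ))) := by
    intro u
    rw [hφ_apply]
    exact Prod.ext (hcomm q u) (hcomm ℓ u)
  -- φ is continuous and surjective
  have hφcont : Continuous φ := by
    refine Continuous.prodMk ?_ ?_ <;>
      exact continuous_finset_sum _ fun j _ => (continuous_apply j).zsmul _
  have hφsurj : Function.Surjective φ := by
    rintro ⟨x, y⟩
    obtain ⟨x', hx'⟩ := QuotientAddGroup.mk_surjective x
    obtain ⟨y', hy'⟩ := QuotientAddGroup.mk_surjective y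
    obtain ⟨u, hu1, hu2⟩ := exists_sol q ℓ hindep x' y'
    exact ⟨fun i => ((u i : ℝ) : AddCircle (1:ℝ)), by
      rw [hφmk, hu1, hu2, hx', hy']⟩
  -- the quotient map on the cube is measure preserving
  have hmk : MeasurePreserving (fun u : Fin n → ℝ => fun i => ((u i : ℝ) : AddCircle (1:ℝ)))
      ((volume : Measure (Fin n → ℝ)).restrict (Set.univ.pi fun _ => Set.Icc (0:ℝ) 1))
      (volume : Measure (Fin n → AddCircle (1:ℝ))) := by
    have h1 : (volume : Measure (Fin n → ℝ)).restrict (Set.univ.pi fun _ => Set.Icc (0:ℝ) 1)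
        = Measure.pi (fun _ : Fin n => (volume : Measure ℝ).restrict (Set.Ioc 0 1)) := by
      rw [Measure.restrict_congr_set (box_ae n), pi_restrict _ fun _ => measurableSet_Ioc]
    rw [h1, show (volume : Measure (Fin n → AddCircle (1:ℝ)))
        = Measure.pi (fun _ : Fin n => volume) from rfl]
    exact measurePreserving_pi _ _ fun i => by
      simpa using AddCircle.measurePreserving_mk 1 0
  -- φ is measure preserving (Haar uniqueness)
  have hmass : (volume : Measure (Fin n → AddCircle (1:ℝ))) Set.univ
      = ((volume : Measure (AddCircle (1:ℝ))).prod (volume : Measure (AddCircle (1:ℝ)))) Set.univ := by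
    rw [show (volume : Measure (Fin n → AddCircle (1:ℝ)))
        = Measure.pi (fun _ : Fin n => volume) from rfl, Measure.pi_univ,
      ← Set.univ_prod_univ, Measure.prod_prod]
    simp [AddCircle.measure_univ]
  have hφMP : MeasurePreserving φ (volume : Measure (Fin n → AddCircle (1:ℝ)))
      ((volume : Measure (AddCircle (1:ℝ))).prod (volume : Measure (AddCircle (1:ℝ)))) :=
    AddMonoidHom.measurePreserving hφcont hφsurj hmass
  -- the ENNReal identity
  have KEY : (∑' p : ℤ, ∑' r : ℤ,
      ∫⁻ u in Set.univ.pi (fun _ : Fin n => Set.Icc (0 : ℝ) 1),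
        fE a ((p : ℝ) + ∑ j, u j * (q j : ℝ)) * fE b ((r : ℝ) + ∑ j, u j * (ℓ j : ℝ)))
      = ENNReal.ofReal (2 * a) * ENNReal.ofReal (2 * b) := by
    have hmeas1 : ∀ p r : ℤ, Measurable fun u : Fin n → ℝ =>
        fE a ((p : ℝ) + ∑ j, u j * (q j : ℝ)) * fE b ((r : ℝ) + ∑ j, u j * (ℓ j : ℝ)) :=
      fun p r => (((fE_measurable a).comp (measurable_const.add hAmeas)).mul
        ((fE_measurable b).comp (measurable_const.add hBmeas)))
    calc (∑' p : ℤ, ∑' r : ℤ,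
        ∫⁻ u in Set.univ.pi (fun _ : Fin n => Set.Icc (0 : ℝ) 1),
          fE a ((p : ℝ) + ∑ j, u j * (q j : ℝ)) * fE b ((r : ℝ) + ∑ j, u j * (ℓ j : ℝ)))
        = ∑' p : ℤ, ∫⁻ u in Set.univ.pi (fun _ : Fin n => Set.Icc (0 : ℝ) 1),
            ∑' r : ℤ, fE a ((p : ℝ) + ∑ j, u j * (q j : ℝ))
              * fE b ((r : ℝ) + ∑ j, u j * (ℓ j : ℝ)) := by
          exact tsum_congr fun p =>
            (lintegral_tsum fun r => (hmeas1 p r).aemeasurable).symm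
      _ = ∫⁻ u in Set.univ.pi (fun _ : Fin n => Set.Icc (0 : ℝ) 1),
            ∑' p : ℤ, ∑' r : ℤ, fE a ((p : ℝ) + ∑ j, u j * (q j : ℝ))
              * fE b ((r : ℝ) + ∑ j, u j * (ℓ j : ℝ)) := by
          exact (lintegral_tsum fun p =>
            (Measurable.ennreal_tsum fun r => hmeas1 p r).aemeasurable).symm
      _ = ∫⁻ u in Set.univ.pi (fun _ : Fin n => Set.Icc (0 : ℝ) 1),
            per a (∑ j, u j * (q j : ℝ)) * per b (∑ j, u j * (ℓ j : ℝ)) := by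
          refine lintegral_congr fun u => ?_
          rw [per, per, ← ENNReal.tsum_mul_right]
          exact tsum_congr fun p => ENNReal.tsum_mul_left.symm ▸ rfl
      _ = ∫⁻ u in Set.univ.pi (fun _ : Fin n => Set.Icc (0 : ℝ) 1),
            perCirc a (φ (fun i => ((u i : ℝ) : AddCircle (1:ℝ)))).1
              * perCirc b (φ (fun i => ((u i : ℝ) : AddCircle (1:ℝ)))).2 := by
          refine lintegral_congr fun u => ?_
          rw [hφmk u]
          rw [perCirc_coe, perCirc_coe]
      _ = ∫⁻ v : Fin n → AddCircle (1:ℝ), perCirc a (φ v).1 * perCirc b (φ v).2 := by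
          exact hmk.lintegral_comp
            (((perCirc_measurable a).comp (measurable_fst.comp hφcont.measurable)).mul
              ((perCirc_measurable b).comp (measurable_snd.comp hφcont.measurable)))
      _ = ∫⁻ z : AddCircle (1:ℝ) × AddCircle (1:ℝ), perCirc a z.1 * perCirc b z.2
            ∂((volume : Measure (AddCircle (1:ℝ))).prod (volume : Measure (AddCircle (1:ℝ)))) := by
          exact hφMP.lintegral_comp
            (((perCirc_measurable a).comp measurable_fst).mul
              ((perCirc_measurable b).comp measurable_snd))
      _ = (∫⁻ z : AddCircle (1:ℝ), perCirc a z) * (∫⁻ z : AddCircle (1:ℝ), perCirc b z) :=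
          lintegral_prod_mul (perCirc_measurable a).aemeasurable
            (perCirc_measurable b).aemeasurable
      _ = ENNReal.ofReal (2 * a) * ENNReal.ofReal (2 * b) := by
          rw [lintegral_perCirc a ha, lintegral_perCirc b hb]
  -- back to real integrals
  have hof : ∀ (s t : Set ℝ) (x y : ℝ),
      ENNReal.ofReal (Set.indicator s (1 : ℝ → ℝ) x * Set.indicator t (1 : ℝ → ℝ) y)
        = Set.indicator s (1 : ℝ → ℝ≥0∞) x * Set.indicator t (1 : ℝ → ℝ≥0∞) y := by
    intro s t x y
    by_cases hx : x ∈ s <;> by_cases hy : y ∈ t <;>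
      simp [Set.indicator_apply, hx, hy]
  have hInt : ∀ p r : ℤ,
      (∫ u in Set.univ.pi (fun _ : Fin n => Set.Icc (0 : ℝ) 1),
        (Set.indicator (Set.Icc (-a) a) 1 ((p : ℝ) + ∑ j, u j * (q j : ℝ))) *
        (Set.indicator (Set.Icc (-b) b) 1 ((r : ℝ) + ∑ j, u j * (ℓ j : ℝ))))
      = (∫⁻ u in Set.univ.pi (fun _ : Fin n => Set.Icc (0 : ℝ) 1),
          fE a ((p : ℝ) + ∑ j, u j * (q j : ℝ))
            * fE b ((r : ℝ) + ∑ j, u j * (ℓ j : ℝ))).toReal := by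
    intro p r
    rw [integral_eq_lintegral_of_nonneg_ae]
    · congr 1
      refine lintegral_congr fun u => ?_
      exact hof _ _ _ _
    · exact Filter.Eventually.of_forall fun u => mul_nonneg
        (Set.indicator_apply_nonneg fun _ => zero_le_one)
        (Set.indicator_apply_nonneg fun _ => zero_le_one)
    · exact ((measurable_one.indicator measurableSet_Icc).comp
        (measurable_const.add hAmeas)).mul
        ((measurable_one.indicator measurableSet_Icc).comp
          (measurable_const.add hBmeas)) |>.aestronglyMeasurable
  -- finiteness
  have hJtop : ∀ p r : ℤ,
      (∫⁻ u in Set.univ.pi (fun _ : Fin n => Set.Icc (0 : ℝ) 1),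
        fE a ((p : ℝ) + ∑ j, u j * (q j : ℝ))
          * fE b ((r : ℝ) + ∑ j, u j * (ℓ j : ℝ))) ≠ ∞ := by
    intro p r
    have hfin : ENNReal.ofReal (2*a) * ENNReal.ofReal (2*b) ≠ ⊤ :=
      ENNReal.mul_ne_top ENNReal.ofReal_ne_top ENNReal.ofReal_ne_top
    refine ne_top_of_le_ne_top hfin ?_
    rw [← KEY]
    exact le_trans (ENNReal.le_tsum r) (ENNReal.le_tsum p)
  have hStop : ∀ p : ℤ,
      (∑' r : ℤ, ∫⁻ u in Set.univ.pi (fun _ : Fin n => Set.Icc (0 : ℝ) 1),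
        fE a ((p : ℝ) + ∑ j, u j * (q j : ℝ))
          * fE b ((r : ℝ) + ∑ j, u j * (ℓ j : ℝ))) ≠ ∞ := by
    intro p
    have hfin : ENNReal.ofReal (2*a) * ENNReal.ofReal (2*b) ≠ ⊤ :=
      ENNReal.mul_ne_top ENNReal.ofReal_ne_top ENNReal.ofReal_ne_top
    refine ne_top_of_le_ne_top hfin ?_
    rw [← KEY]
    exact ENNReal.le_tsum p
  calc (∑' p : ℤ, ∑' r : ℤ,
      ∫ u in Set.univ.pi (fun _ : Fin n => Set.Icc (0 : ℝ) 1),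
        (Set.indicator (Set.Icc (-a) a) 1 ((p : ℝ) + ∑ j, u j * (q j : ℝ))) *
        (Set.indicator (Set.Icc (-b) b) 1 ((r : ℝ) + ∑ j, u j * (ℓ j : ℝ))))
      = ∑' p : ℤ, ∑' r : ℤ,
        (∫⁻ u in Set.univ.pi (fun _ : Fin n => Set.Icc (0 : ℝ) 1),
          fE a ((p : ℝ) + ∑ j, u j * (q j : ℝ))
            * fE b ((r : ℝ) + ∑ j, u j * (ℓ j : ℝ))).toReal := by
        exact tsum_congr fun p => tsum_congr fun r => hInt p r
    _ = ∑' p : ℤ, (∑' r : ℤ,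
        ∫⁻ u in Set.univ.pi (fun _ : Fin n => Set.Icc (0 : ℝ) 1),
          fE a ((p : ℝ) + ∑ j, u j * (q j : ℝ))
            * fE b ((r : ℝ) + ∑ j, u j * (ℓ j : ℝ))).toReal := by
        exact tsum_congr fun p => (ENNReal.tsum_toReal_eq fun r => hJtop p r).symm
    _ = (∑' p : ℤ, ∑' r : ℤ,
        ∫⁻ u in Set.univ.pi (fun _ : Fin n => Set.Icc (0 : ℝ) 1),
          fE a ((p : ℝ) + ∑ j, u j * (q j : ℝ))
            * fE b ((r : ℝ) + ∑ j, u j * (ℓ j : ℝ))).toReal := by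
        exact (ENNReal.tsum_toReal_eq fun p => hStop p).symm
    _ = 4 * a * b := by
        rw [KEY, ← ENNReal.ofReal_mul (by linarith)]
        rw [ENNReal.toReal_ofReal (by nlinarith)]
        ring

end
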